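/- arXiv:2505.11430 — 3 statements merged into one kernel-verified Lean document; each statement's English description precedes it below -/
import Mathlib

section
/- Let n ≥ 1 and d ≥ 1 be natural numbers, let T be a natural number, and let a, b : ℕ → ℕ be nonincreasing sequences with a 0 ≤ n and b 0 ≤ n. Suppose that for every t < T at least one of the following holds: (i) a (t+1) + d ≤ a t; (ii) b t ≥ 1 and 2·b (t+1) ≤ b t; (iii) a t ≥ 1 and 4·a (t+1) ≤ 3·a t. Then, as real numbers, T ≤ n/d + log₂ n + log_{4/3} n + 2. -/
/-- Abstract accounting lemma bounding the number of attempts: if each attempt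
either decreases `a` by at least `d`, or halves `b` (when `b ≥ 1`), or decreases
`a` by a constant factor (when `a ≥ 1`), then the number of attempts is at most
`n/d + log₂ n + log_{4/3} n + 2`. -/
theorem attempts_bound (n d T : ℕ) (hn : 1 ≤ n) (hd : 1 ≤ d)
    (a b : ℕ → ℕ) (ha : Antitone a) (hb : Antitone b)
    (ha0 : a 0 ≤ n) (hb0 : b 0 ≤ n)
    (hstep : ∀ t < T,
      (a (t + 1) + d ≤ a t) ∨
      (1 ≤ b t ∧ 2 * b (t + 1) ≤ b t) ∨
      (1 ≤ a t ∧ 4 * a (t + 1) ≤ 3 * a t)) :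
    (T : ℝ) ≤ (n : ℝ) / d + Real.logb 2 n + Real.logb (4 / 3) n + 2 := by
  have h2 : (1:ℝ) < 2 := one_lt_two
  have h43 : (1:ℝ) < 4/3 := by norm_num
  set F : ℕ → ℝ := fun m => if m = 0 then -1 else Real.logb 2 m with hF
  set G : ℕ → ℝ := fun m => if m = 0 then -1 else Real.logb (4/3) m with hG
  have hFlb : ∀ m, -1 ≤ F m := by
    intro m
    by_cases hm : m = 0
    · simp [hF, hm]
    · simp only [hF, if_neg hm]
      have : (0:ℝ) ≤ Real.logb 2 m :=
        Real.logb_nonneg h2 (by exact_mod_cast Nat.one_le_iff_ne_zero.mpr hm)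
      linarith
  have hGlb : ∀ m, -1 ≤ G m := by
    intro m
    by_cases hm : m = 0
    · simp [hG, hm]
    · simp only [hG, if_neg hm]
      have : (0:ℝ) ≤ Real.logb (4/3) m :=
        Real.logb_nonneg h43 (by exact_mod_cast Nat.one_le_iff_ne_zero.mpr hm)
      linarith
  have hFmono : ∀ x y : ℕ, x ≤ y → F x ≤ F y := by
    intro x y hxy
    by_cases hx : x = 0
    · subst hx; exact (by simpa [hF] using hFlb y)
    · have hy : y ≠ 0 := by omega
      simp only [hF, if_neg hx, if_neg hy]
      exact Real.logb_le_logb_of_le (by norm_num : (1:ℝ)<_) (by exact_mod_cast Nat.pos_of_ne_zero hx) (by exact_mod_cast hxy)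
  have hGmono : ∀ x y : ℕ, x ≤ y → G x ≤ G y := by
    intro x y hxy
    by_cases hx : x = 0
    · subst hx; exact (by simpa [hG] using hGlb y)
    · have hy : y ≠ 0 := by omega
      simp only [hG, if_neg hx, if_neg hy]
      exact Real.logb_le_logb_of_le (by norm_num : (1:ℝ)<_) (by exact_mod_cast Nat.pos_of_ne_zero hx) (by exact_mod_cast hxy)
  -- drop lemmas
  have hFdrop : ∀ x y : ℕ, 1 ≤ y → 2 * x ≤ y → F x + 1 ≤ F y := by
    intro x y hy hxy
    have hy0 : y ≠ 0 := by omega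
    by_cases hx : x = 0
    · simp only [hF, hx, if_pos rfl, if_neg hy0]
      have : (0:ℝ) ≤ Real.logb 2 y := Real.logb_nonneg h2 (by exact_mod_cast hy)
      linarith
    · simp only [hF, if_neg hx, if_neg hy0]
      have hxpos : (0:ℝ) < (x:ℝ) := by exact_mod_cast Nat.pos_of_ne_zero hx
      have h1 : Real.logb 2 ((2:ℝ) * x) ≤ Real.logb 2 y := by
        apply Real.logb_le_logb_of_le (by norm_num : (1:ℝ)<_) (by positivity : (0:ℝ) < 2 * (x:ℝ))
        exact_mod_cast hxy
      rw [Real.logb_mul (by norm_num) (ne_of_gt hxpos)] at h1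
      simp only [Real.logb_self_eq_one h2] at h1
      linarith [h1]
  have hGdrop : ∀ x y : ℕ, 1 ≤ y → 4 * x ≤ 3 * y → G x + 1 ≤ G y := by
    intro x y hy hxy
    have hy0 : y ≠ 0 := by omega
    by_cases hx : x = 0
    · simp only [hG, hx, if_pos rfl, if_neg hy0]
      have : (0:ℝ) ≤ Real.logb (4/3) y := Real.logb_nonneg h43 (by exact_mod_cast hy)
      linarith
    · simp only [hG, if_neg hx, if_neg hy0]
      have hxpos : (0:ℝ) < (x:ℝ) := by exact_mod_cast Nat.pos_of_ne_zero hx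
      have hle : (4/3 : ℝ) * x ≤ (y:ℝ) := by
        have : (4:ℝ) * x ≤ 3 * y := by exact_mod_cast hxy
        linarith
      have h1 : Real.logb (4/3) ((4/3:ℝ) * x) ≤ Real.logb (4/3) y :=
        Real.logb_le_logb_of_le (by norm_num : (1:ℝ)<_) (by positivity) hle
      rw [Real.logb_mul (by norm_num) (ne_of_gt hxpos)] at h1
      simp only [Real.logb_self_eq_one h43] at h1
      linarith [h1]
  set Φ : ℕ → ℝ := fun t => (a t : ℝ) / d + F (b t) + G (a t) with hΦ
  have hdpos : (0:ℝ) < d := by exact_mod_cast hd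
  have hstep' : ∀ t < T, Φ (t+1) + 1 ≤ Φ t := by
    intro t ht
    have hadiv : (a (t+1) : ℝ) / d ≤ (a t : ℝ) / d :=
      by gcongr; exact_mod_cast ha (Nat.le_succ t)
    have hFm : F (b (t+1)) ≤ F (b t) := hFmono _ _ (hb (Nat.le_succ t))
    have hGm : G (a (t+1)) ≤ G (a t) := hGmono _ _ (ha (Nat.le_succ t))
    rcases hstep t ht with h | ⟨h1, h2'⟩ | ⟨h1, h2'⟩
    · have : (a (t+1) : ℝ) + d ≤ a t := by exact_mod_cast h
      have hdiv : (a (t+1) : ℝ) / d + 1 ≤ (a t : ℝ) / d := by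
        rw [div_add' _ _ _ (ne_of_gt hdpos), div_le_div_iff₀ hdpos hdpos]
        nlinarith
      simp only [hΦ]; linarith
    · have := hFdrop (b (t+1)) (b t) h1 h2'
      simp only [hΦ]; linarith
    · have := hGdrop (a (t+1)) (a t) h1 h2'
      simp only [hΦ]; linarith
  have key : ∀ t, t ≤ T → Φ t + t ≤ Φ 0 := by
    intro t
    induction t with
    | zero => intro _; simp
    | succ k ih =>
      intro hk
      have h1 := hstep' k (by omega)
      have h2' := ih (by omega)
      push_cast
      linarith
  have hlow : -2 ≤ Φ T := by
    have := hFlb (b T)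
    have := hGlb (a T)
    have : (0:ℝ) ≤ (a T : ℝ) / d := div_nonneg (by positivity) (le_of_lt hdpos)
    simp only [hΦ]
    linarith [hFlb (b T), hGlb (a T)]
  have hn0 : (n:ℕ) ≠ 0 := by omega
  have hup : Φ 0 ≤ (n:ℝ)/d + Real.logb 2 n + Real.logb (4/3) n := by
    have h1 : (a 0 : ℝ) / d ≤ (n:ℝ)/d :=
      by gcongr
    have h2' : F (b 0) ≤ Real.logb 2 n := by
      have := hFmono (b 0) n hb0
      simpa [hF, hn0] using this
    have h3 : G (a 0) ≤ Real.logb (4/3) n := by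
      have := hGmono (a 0) n ha0
      simpa [hG, hn0] using this
    simp only [hΦ]; linarith
  have := key T le_rfl
  clear_value F G Φ
  linarith
end

section
/- Let R be a commutative semiring, let m and r be natural numbers, and let α, β : Fin r → Matrix (Fin m) (Fin m) R and γ : Fin m → Fin m → Fin r → R satisfy the matrix-multiplication-tensor identity: for all i, j, a, b, c, d : Fin m, Σ_{k : Fin r} γ i j k * (α k) a b * (β k) c d = (if a = i ∧ b = c ∧ d = j then 1 else 0). Then for every associative R-algebra S (not necessarily commutative) and all matrices X, Y : Matrix (Fin m) (Fin m) S, one has for all i, j : Fin m: (X*Y) i j = Σ_{k : Fin r} γ i j k • (X̂ k * Ŷ k), where X̂ k := Σ_{a, b : Fin m} (α k) a b • X a b ∈ S, Ŷ k := Σ_{c, d : Fin m} (β k) c d • Y c d ∈ S, and • denotes the R-scalar action on S. -/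
/-- A bilinear (fast) matrix multiplication tensor over a commutative semiring `R`
remains correct when the matrix entries lie in an arbitrary (possibly
noncommutative) `R`-algebra `S`. -/
theorem tensor_correct_over_algebra (R : Type*) [CommSemiring R]
    (m r : ℕ)
    (α β : Fin r → Matrix (Fin m) (Fin m) R)
    (γ : Fin m → Fin m → Fin r → R)
    (htensor : ∀ i j a b c d : Fin m,
      ∑ k : Fin r, γ i j k * (α k) a b * (β k) c d =
        if a = i ∧ b = c ∧ d = j then 1 else 0)
    (S : Type*) [Semiring S] [Algebra R S]
    (X Y : Matrix (Fin m) (Fin m) S) (i j : Fin m) :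
    (X * Y) i j =
      ∑ k : Fin r, γ i j k •
        ((∑ a : Fin m, ∑ b : Fin m, (α k) a b • X a b) *
         (∑ c : Fin m, ∑ d : Fin m, (β k) c d • Y c d)) := by
  have hrhs : ∀ k : Fin r, γ i j k •
        ((∑ a : Fin m, ∑ b : Fin m, (α k) a b • X a b) *
         (∑ c : Fin m, ∑ d : Fin m, (β k) c d • Y c d)) =
      ∑ c : Fin m, ∑ d : Fin m, ∑ a : Fin m, ∑ b : Fin m,
        (γ i j k * (α k) a b * (β k) c d) • (X a b * Y c d) := by
    intro k
    simp only [Finset.sum_mul, Finset.mul_sum, Finset.smul_sum,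
      smul_mul_smul_comm, smul_smul, mul_assoc]
  simp only [hrhs]
  rw [Finset.sum_comm]
  conv_rhs => enter [2, c]; rw [Finset.sum_comm]
  conv_rhs => enter [2, c, 2, d]; rw [Finset.sum_comm]
  conv_rhs => enter [2, c, 2, d, 2, a]; rw [Finset.sum_comm]
  simp only [← Finset.sum_smul, htensor]
  rw [Matrix.mul_apply]
  simp [ite_and, Finset.sum_ite_eq, Finset.sum_ite_eq', ite_smul]
end

section
/- Let R be a commutative semiring, let m, r, p be natural numbers, and let α, β : Fin r → Matrix (Fin m) (Fin m) R and γ : Fin m → Fin m → Fin r → R satisfy the matrix-multiplication-tensor identity: for all i, j, a, b, c, d : Fin m, Σ_{k : Fin r} γ i j k * (α k) a b * (β k) c d = (if a = i ∧ b = c ∧ d = j then 1 else 0). Let A, B be matrices indexed by (Fin m × Fin p) × (Fin m × Fin p) with entries in R, with blocks A^i_j : Matrix (Fin p) (Fin p) R defined by A^i_j a b = A (i,a) (j,b) (and similarly for B and A*B). Define Â k := Σ_{a, b : Fin m} (α k) a b • A^a_b and B̂ k := Σ_{c, d : Fin m} (β k) c d • B^c_d, both p×p matrices over R. Then for all i,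 j : Fin m, (A*B)^i_j = Σ_{k : Fin r} γ i j k • (Â k * B̂ k). -/
/-- The `(i,j)`-block of a matrix indexed blockwise. -/
def blockOf {R : Type*} {m p : ℕ}
    (M : Matrix (Fin m × Fin p) (Fin m × Fin p) R) (i j : Fin m) :
    Matrix (Fin p) (Fin p) R :=
  Matrix.of fun a b => M (i, a) (j, b)

/-- The block identity `C^i_j = Σ_k γ^{i,j}_k Â_k B̂_k` obtained by applying a
rank-`r` bilinear matrix multiplication tensor for `m × m` matrices to the
`m × m` grid of `p × p` blocks of an `n × n` matrix (`n = m·p`). -/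
theorem fast_block_mul (R : Type*) [CommSemiring R] (m r p : ℕ)
    (α β : Fin r → Matrix (Fin m) (Fin m) R)
    (γ : Fin m → Fin m → Fin r → R)
    (htensor : ∀ i j a b c d : Fin m,
      ∑ k : Fin r, γ i j k * (α k) a b * (β k) c d =
        if a = i ∧ b = c ∧ d = j then 1 else 0)
    (A B : Matrix (Fin m × Fin p) (Fin m × Fin p) R) (i j : Fin m) :
    blockOf (A * B) i j =
      ∑ k : Fin r, γ i j k •
        ((∑ a : Fin m, ∑ b : Fin m, (α k) a b • blockOf A a b) *
         (∑ c : Fin m, ∑ d : Fin m, (β k) c d • blockOf B c d)) := by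
  ext x y
  simp only [blockOf, Matrix.mul_apply, Matrix.of_apply, Matrix.sum_apply, Matrix.smul_apply,
    smul_eq_mul, Fintype.sum_prod_type, Finset.mul_sum, Finset.sum_mul]
  conv_rhs =>
    rw [Finset.sum_comm]
    enter [2, c]
    rw [Finset.sum_comm]
    enter [2, d]
    rw [Finset.sum_comm]
    enter [2, a]
    rw [Finset.sum_comm]
    enter [2, b]
    rw [Finset.sum_comm]
  simp_rw [show ∀ (k : Fin r) (a b c d : Fin m) (v : Fin p),
      γ i j k * (α k a b * A (a, x) (b, v) * (β k c d * B (c, v) (d, y))) =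
        γ i j k * α k a b * β k c d * (A (a, x) (b, v) * B (c, v) (d, y)) from
      fun _ _ _ _ _ _ => by ring, ← Finset.sum_mul, htensor, ite_mul, one_mul, zero_mul]
  simp [Finset.sum_ite_eq, Finset.sum_ite_eq', ite_and]
end
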